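/- For every n ≥ 1, the n-th generalized graded codimension of UT₂ with its canonical ℤ₂-grading and with the trivial action B = F·1 (so that c_n^{F·1} is the ordinary ℤ₂-graded codimension of UT₂) is c_n^{F·1} = n·2^{n−1} + 1. -/

import Mathlib

noncomputable section

/-- The algebra of `2 × 2` matrices over `F` (ambient algebra for `UT₂`). -/
abbrev M2 (F : Type*) [Field F] := Matrix (Fin 2) (Fin 2) F

/-- The matrix unit `e₁₁`. -/
def e11 (F : Type*) [Field F] : M2 F := Matrix.single 0 0 1

/-- The matrix unit `e₁₂`. -/
def e12 (F : Type*) [Field F] : M2 F := Matrix.single 0 1 1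

/-- The matrix unit `e₂₂`. -/
def e22 (F : Type*) [Field F] : M2 F := Matrix.single 1 1 1

/-- The homogeneous components of the canonical `ℤ₂`-grading of `UT₂`:
`UT₂⁰ = F e₁₁ ⊕ F e₂₂` and `UT₂¹ = F e₁₂`. -/
def utComp (F : Type*) [Field F] (b : Bool) : Submodule F (M2 F) :=
  if b then Submodule.span F {e12 F} else Submodule.span F {e11 F, e22 F}

/-- `UT₂`, the set of `2 × 2` upper triangular matrices. -/
def UTset (F : Type*) [Field F] : Set (M2 F) := {M | M 1 0 = 0}

/-- The space `V_B(γ)`: the `F`-span of all functions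
`(x₁,…,xₙ) ↦ b₀ x_{σ(1)} b₁ x_{σ(2)} ⋯ b_{n-1} x_{σ(n)} bₙ` with `σ` a permutation and
`b₀,…,bₙ ∈ B`, defined on the homogeneous components prescribed by `γ ∈ {0,1}ⁿ`. -/
def Vspan (F : Type*) [Field F] (B : Set (M2 F)) {n : ℕ} (γ : Fin n → Bool) :
    Submodule F ((∀ i : Fin n, ↥(utComp F (γ i))) → M2 F) :=
  Submodule.span F
    {f | ∃ (σ : Equiv.Perm (Fin n)) (b : Fin (n + 1) → M2 F),
      (∀ i, b i ∈ B) ∧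
      f = fun x => b 0 * (List.ofFn fun i : Fin n => ((x (σ i) : M2 F) * b i.succ)).prod}


/-- The trivially acting subalgebra `F·1` of `UT₂`. -/
def F1set (F : Type*) [Field F] : Set (M2 F) := {M | ∃ a : F, M = a • (1 : M2 F)}

namespace S14
open Finset

variable {F : Type*} [Field F] {n : ℕ}

@[simp] lemma e11_app (i j : Fin 2) : e11 F i j = if i = 0 ∧ j = 0 then 1 else 0 := by
  simp [e11, Matrix.single]; aesop
@[simp] lemma e12_app (i j : Fin 2) : e12 F i j = if i = 0 ∧ j = 1 then 1 else 0 := by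
  simp [e12, Matrix.single]; aesop
@[simp] lemma e22_app (i j : Fin 2) : e22 F i j = if i = 1 ∧ j = 1 then 1 else 0 := by
  simp [e22, Matrix.single]; aesop

lemma mem_false {m : M2 F} (h : m ∈ utComp F false) : m 0 1 = 0 ∧ m 1 0 = 0 := by
  rw [utComp, if_neg (by simp)] at h
  obtain ⟨a, b, rfl⟩ := Submodule.mem_span_pair.1 h
  constructor <;> simp [Matrix.add_apply]

lemma mem_true {m : M2 F} (h : m ∈ utComp F true) :
    m 0 0 = 0 ∧ m 1 0 = 0 ∧ m 1 1 = 0 := by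
  rw [utComp, if_pos rfl] at h
  obtain ⟨a, rfl⟩ := Submodule.mem_span_singleton.1 h
  refine ⟨by simp, by simp, by simp⟩

lemma e11_mem : e11 F ∈ utComp F false := by
  rw [utComp, if_neg (by simp)]; exact Submodule.subset_span (by simp)
lemma e22_mem : e22 F ∈ utComp F false := by
  rw [utComp, if_neg (by simp)]; exact Submodule.subset_span (by simp)
lemma e12_mem : e12 F ∈ utComp F true := by
  rw [utComp, if_pos rfl]; exact Submodule.subset_span rfl

lemma x01_zero {b : Bool} (hb : b = false) {m : M2 F} (h : m ∈ utComp F b) : m 0 1 = 0 := by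
  subst hb; exact (mem_false h).1

lemma x00_zero {b : Bool} (hb : b = true) {m : M2 F} (h : m ∈ utComp F b) : m 0 0 = 0 := by
  subst hb; exact (mem_true h).1

lemma x11_zero {b : Bool} (hb : b = true) {m : M2 F} (h : m ∈ utComp F b) : m 1 1 = 0 := by
  subst hb; exact (mem_true h).2.2

lemma ut_mem {b : Bool} {m : M2 F} (h : m ∈ utComp F b) : m 1 0 = 0 := by
  cases b
  · exact (mem_false h).2
  · exact (mem_true h).2.1

lemma filt_lt_succ {m : ℕ} (g : Fin (m+1) → F) (k : ℕ) :
    ∏ r ∈ filter (fun r : Fin (m+1) => (r:ℕ) < k+1) univ, g r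
      = g 0 * ∏ r ∈ filter (fun r : Fin m => (r:ℕ) < k) univ, g r.succ := by
  rw [Finset.prod_filter, Finset.prod_filter, Fin.prod_univ_succ]
  simp [Nat.succ_lt_succ_iff]

lemma filt_lt_zero {m : ℕ} (g : Fin m → F) :
    ∏ r ∈ filter (fun r : Fin m => (r:ℕ) < 0) univ, g r = 1 := by
  rw [Finset.prod_filter]; simp

lemma filt_gt_succ {m : ℕ} (g : Fin (m+1) → F) (k : ℕ) :
    ∏ r ∈ filter (fun r : Fin (m+1) => k+1 < (r:ℕ)) univ, g r
      = ∏ r ∈ filter (fun r : Fin m => k < (r:ℕ)) univ, g r.succ := by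
  rw [Finset.prod_filter, Finset.prod_filter, Fin.prod_univ_succ]
  simp [Nat.succ_lt_succ_iff]

lemma filt_gt_zero {m : ℕ} (g : Fin (m+1) → F) :
    ∏ r ∈ filter (fun r : Fin (m+1) => 0 < (r:ℕ)) univ, g r = ∏ r : Fin m, g r.succ := by
  rw [Finset.prod_filter, Fin.prod_univ_succ]
  simp

/-- The `(0,1)`-entry of a product of upper triangular `2×2` matrices. -/
def pOdd {m : ℕ} (f : Fin m → M2 F) : F :=
  ∑ p : Fin m, (∏ r ∈ filter (fun r : Fin m => (r:ℕ) < (p:ℕ)) univ, f r 0 0)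
    * f p 0 1 * (∏ r ∈ filter (fun r : Fin m => (p:ℕ) < (r:ℕ)) univ, f r 1 1)

lemma prod_entries {m : ℕ} (f : Fin m → M2 F) (h : ∀ r, f r 1 0 = 0) :
    (List.ofFn f).prod 1 0 = 0 ∧ (List.ofFn f).prod 0 0 = ∏ r, f r 0 0 ∧
    (List.ofFn f).prod 1 1 = ∏ r, f r 1 1 ∧ (List.ofFn f).prod 0 1 = pOdd f := by
  induction m with
  | zero => simp [pOdd, Matrix.one_apply]
  | succ m ih =>
    obtain ⟨h10, h00, h11, h01⟩ := ih (fun r => f r.succ) (fun r => h r.succ)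
    rw [List.ofFn_succ, List.prod_cons]
    have e : ∀ a b : Fin 2, (f 0 * (List.ofFn fun r => f r.succ).prod) a b
        = f 0 a 0 * (List.ofFn fun r => f r.succ).prod 0 b
          + f 0 a 1 * (List.ofFn fun r => f r.succ).prod 1 b := by
      intro a b; rw [Matrix.mul_apply, Fin.sum_univ_two]
    refine ⟨?_, ?_, ?_, ?_⟩
    · rw [e, h10, h 0]; ring
    · rw [e, h10, h00, Fin.prod_univ_succ]; ring
    · rw [e, h 0, h11, Fin.prod_univ_succ]; ring
    · rw [e, h01, h11]
      conv_rhs => rw [pOdd, Fin.sum_univ_succ]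
      simp only [Fin.val_zero, Fin.val_succ, filt_lt_zero, filt_gt_zero]
      have : ∀ q : Fin m,
          (∏ r ∈ filter (fun r : Fin (m+1) => (r:ℕ) < (q:ℕ)+1) univ, f r 0 0)
            * f q.succ 0 1
            * (∏ r ∈ filter (fun r : Fin (m+1) => (q:ℕ)+1 < (r:ℕ)) univ, f r 1 1)
          = f 0 0 0 * ((∏ r ∈ filter (fun r : Fin m => (r:ℕ) < (q:ℕ)) univ, f r.succ 0 0)
              * f q.succ 0 1
              * (∏ r ∈ filter (fun r : Fin m => (q:ℕ) < (r:ℕ)) univ, f r.succ 1 1)) := by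
        intro q
        rw [filt_lt_succ, filt_gt_succ]; ring
      rw [Finset.sum_congr rfl (fun q _ => this q), ← Finset.mul_sum, pOdd]
      simp [Finset.prod_filter, Fin.prod_univ_succ]
      ring

lemma prod_trichotomy {m : ℕ} (w : Fin m → F) (p : Fin m) :
    (∏ r ∈ filter (fun r : Fin m => (r:ℕ) < (p:ℕ)) univ, w r) * w p
      * (∏ r ∈ filter (fun r : Fin m => (p:ℕ) < (r:ℕ)) univ, w r) = ∏ r, w r := by
  have h1 : (univ : Finset (Fin m)) = (filter (fun r : Fin m => (r:ℕ) < (p:ℕ)) univ)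
      ∪ ({p} ∪ filter (fun r : Fin m => (p:ℕ) < (r:ℕ)) univ) := by
    ext r; simp; omega
  conv_rhs => rw [h1]
  rw [Finset.prod_union, Finset.prod_union] <;>
    first
      | rw [Finset.prod_singleton, mul_assoc]
      | · rw [Finset.disjoint_left]; intro a ha hb; simp at ha hb; omega

/-- The basic product map determined by a permutation. -/
def Pmap (F : Type*) [Field F] {n : ℕ} (γ : Fin n → Bool) (σ : Equiv.Perm (Fin n)) :
    (∀ i : Fin n, ↥(utComp F (γ i))) → M2 F :=
  fun x => (List.ofFn fun r : Fin n => (x (σ r) : M2 F)).prod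

lemma smul_ofFn_prod {m : ℕ} (c : Fin m → F) (g : Fin m → M2 F) :
    (List.ofFn fun i => c i • g i).prod = (∏ i, c i) • (List.ofFn g).prod := by
  induction m with
  | zero => simp
  | succ k ih =>
    rw [List.ofFn_succ, List.ofFn_succ, List.prod_cons, List.prod_cons,
      ih (fun i => c i.succ) (fun i => g i.succ), Fin.prod_univ_succ,
      smul_mul_smul_comm]

lemma Vspan_eq (γ : Fin n → Bool) :
    Vspan F (F1set F) γ = Submodule.span F (Set.range (Pmap F γ)) := by
  apply le_antisymm
  · rw [Vspan, Submodule.span_le]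
    rintro f ⟨σ, b, hb, rfl⟩
    choose a ha using hb
    have : (fun x : ∀ i : Fin n, ↥(utComp F (γ i)) =>
        b 0 * (List.ofFn fun i : Fin n => ((x (σ i) : M2 F) * b i.succ)).prod)
        = (a 0 * ∏ i : Fin n, a i.succ) • Pmap F γ σ := by
      funext x
      have h2 : ∀ i : Fin n, ((x (σ i) : M2 F) * b i.succ) = a i.succ • (x (σ i) : M2 F) := by
        intro i; rw [ha i.succ, mul_smul_comm, mul_one]
      simp only [h2]
      rw [smul_ofFn_prod, ha 0]
      simp only [Pi.smul_apply, Pmap]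
      rw [smul_mul_assoc, one_mul, smul_smul]
    rw [this]
    exact Submodule.smul_mem _ _ (Submodule.subset_span ⟨σ, rfl⟩)
  · rw [Submodule.span_le]
    rintro f ⟨σ, rfl⟩
    apply Submodule.subset_span
    refine ⟨σ, fun _ => 1, fun i => ⟨1, by simp⟩, ?_⟩
    funext x
    simp [Pmap]

section Cases
variable (γ : Fin n → Bool)

/-- Case γ ≡ 0. -/
lemma finrank_zero_case (hn : 1 ≤ n) (hγ : ∀ i, γ i = false) :
    Module.finrank F ↥(Vspan F (F1set F) γ) = 1 := by
  classical
  set h0 : (∀ i : Fin n, ↥(utComp F (γ i))) → M2 F :=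
    fun x => (∏ i, (x i : M2 F) 0 0) • e11 F + (∏ i, (x i : M2 F) 1 1) • e22 F with hh0
  have hP : ∀ σ : Equiv.Perm (Fin n), Pmap F γ σ = h0 := by
    intro σ
    funext x
    have hut : ∀ r : Fin n, ((x (σ r) : M2 F)) 1 0 = 0 := fun r => ut_mem (x (σ r)).2
    obtain ⟨p10, p00, p11, p01⟩ := prod_entries (fun r => (x (σ r) : M2 F)) hut
    have hodd : pOdd (fun r => (x (σ r) : M2 F)) = 0 := by
      rw [pOdd]
      apply Finset.sum_eq_zero
      intro p _
      rw [x01_zero (hγ (σ p)) (x (σ p)).2]; ring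
    have e00 : (∏ r : Fin n, ((x (σ r) : M2 F)) 0 0) = ∏ i, (x i : M2 F) 0 0 :=
      Equiv.prod_comp σ (fun i => (x i : M2 F) 0 0)
    have e11' : (∏ r : Fin n, ((x (σ r) : M2 F)) 1 1) = ∏ i, (x i : M2 F) 1 1 :=
      Equiv.prod_comp σ (fun i => (x i : M2 F) 1 1)
    ext a b
    fin_cases a <;> fin_cases b <;>
      simp only [Pmap, hh0, Fin.zero_eta, Fin.mk_one, Fin.isValue, Matrix.add_apply,
        Matrix.smul_apply, e11_app, e22_app, smul_eq_mul]
    · rw [p00, e00]; norm_num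
    · rw [p01, hodd]; norm_num
    · rw [p10]; norm_num
    · rw [p11, e11']; norm_num
  have hr : Set.range (Pmap F γ) = {h0} := by
    ext f
    constructor
    · rintro ⟨σ, rfl⟩; exact hP σ
    · rintro rfl; exact ⟨1, hP 1⟩
  rw [Vspan_eq, hr]
  rw [finrank_span_singleton]
  intro hzero
  set x0 : ∀ i : Fin n, ↥(utComp F (γ i)) := fun i => ⟨e11 F, by rw [hγ i]; exact e11_mem⟩
    with hx0
  have hx : h0 x0 = e11 F := by
    simp only [hh0]
    have h1 : (∏ i : Fin n, ((x0 i : M2 F)) 0 0) = 1 :=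
      Finset.prod_eq_one (fun i _ => by rw [hx0]; simp)
    have h2 : (∏ i : Fin n, ((x0 i : M2 F)) 1 1) = 0 :=
      Finset.prod_eq_zero (Finset.mem_univ (⟨0, hn⟩ : Fin n)) (by rw [hx0]; simp)
    rw [h1, h2, one_smul, zero_smul, add_zero]
  have hne : e11 F ≠ 0 := by
    intro h
    have := congrFun (congrFun h 0) 0
    simp at this
  exact hne (by rw [← hx, hzero]; rfl)

/-- Case two or more odd variables. -/
lemma finrank_two_case (i1 i2 : Fin n) (hne : i1 ≠ i2) (h1 : γ i1 = true) (h2 : γ i2 = true) :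
    Module.finrank F ↥(Vspan F (F1set F) γ) = 0 := by
  have hP : ∀ σ : Equiv.Perm (Fin n), Pmap F γ σ = 0 := by
    intro σ
    funext x
    have hut : ∀ r : Fin n, ((x (σ r) : M2 F)) 1 0 = 0 := fun r => ut_mem (x (σ r)).2
    obtain ⟨p10, p00, p11, p01⟩ := prod_entries (fun r => (x (σ r) : M2 F)) hut
    have e00 : (∏ r : Fin n, ((x (σ r) : M2 F)) 0 0) = 0 :=
      Finset.prod_eq_zero (Finset.mem_univ (σ.symm i1))
        (x00_zero (by rw [Equiv.apply_symm_apply]; exact h1) (x (σ (σ.symm i1))).2)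
    have e11' : (∏ r : Fin n, ((x (σ r) : M2 F)) 1 1) = 0 :=
      Finset.prod_eq_zero (Finset.mem_univ (σ.symm i1))
        (x11_zero (by rw [Equiv.apply_symm_apply]; exact h1) (x (σ (σ.symm i1))).2)
    have hodd : pOdd (fun r => (x (σ r) : M2 F)) = 0 := by
      rw [pOdd]
      apply Finset.sum_eq_zero
      intro p _
      rcases Bool.dichotomy (γ (σ p)) with hc | hc
      · rw [x01_zero hc (x (σ p)).2]; ring
      · have hs : ∃ s : Fin n, s ≠ p ∧ γ (σ s) = true := by
          by_cases hp : σ.symm i1 = p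
          · refine ⟨σ.symm i2, ?_, by rw [Equiv.apply_symm_apply]; exact h2⟩
            intro hq
            exact hne (σ.symm.injective (hp.trans hq.symm))
          · exact ⟨σ.symm i1, hp, by rw [Equiv.apply_symm_apply]; exact h1⟩
        obtain ⟨s, hsp, hst⟩ := hs
        rcases lt_or_gt_of_ne (fun hv => hsp (Fin.eq_of_val_eq hv) :
            (s:ℕ) ≠ (p:ℕ)) with hlt | hgt
        · have hz : (∏ r ∈ filter (fun r : Fin n => (r:ℕ) < (p:ℕ)) univ,
              ((x (σ r) : M2 F)) 0 0) = 0 :=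
            Finset.prod_eq_zero (Finset.mem_filter.2 ⟨Finset.mem_univ s, hlt⟩)
              (x00_zero hst (x (σ s)).2)
          rw [hz]; ring
        · have hz : (∏ r ∈ filter (fun r : Fin n => (p:ℕ) < (r:ℕ)) univ,
              ((x (σ r) : M2 F)) 1 1) = 0 :=
            Finset.prod_eq_zero (Finset.mem_filter.2 ⟨Finset.mem_univ s, hgt⟩)
              (x11_zero hst (x (σ s)).2)
          rw [hz]; ring
    ext a b
    fin_cases a <;> fin_cases b <;>
      simp only [Pmap, Fin.zero_eta, Fin.mk_one, Fin.isValue, Pi.zero_apply,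
        Matrix.zero_apply]
    · rw [p00, e00]
    · rw [p01, hodd]
    · rw [p10]
    · rw [p11, e11']
  have : Vspan F (F1set F) γ = ⊥ := by
    rw [Vspan_eq]
    apply Submodule.span_eq_bot.2
    rintro f ⟨σ, rfl⟩
    exact hP σ
  rw [this]
  exact finrank_bot F _

/-- The candidate basis maps for the one-odd-variable case. -/
def Gmap (F : Type*) [Field F] {n : ℕ} (γ : Fin n → Bool) (j : Fin n)
    (v : {v : Fin n → Bool // v j = true}) :
    (∀ i : Fin n, ↥(utComp F (γ i))) → M2 F :=
  fun x => (∏ i : Fin n, (if i = j then (x i : M2 F) 0 1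
    else if v.1 i then (x i : M2 F) 0 0 else (x i : M2 F) 1 1)) • e12 F

lemma Pmap_eq_Gmap (j : Fin n) (hj : γ j = true) (ho : ∀ i, i ≠ j → γ i = false)
    (σ : Equiv.Perm (Fin n)) :
    Pmap F γ σ = Gmap F γ j
      ⟨fun i => if i = j then true else decide ((σ.symm i : ℕ) < (σ.symm j : ℕ)),
        by simp⟩ := by
  funext x
  have hxc : ∀ {i k : Fin n}, i = k → ∀ a b : Fin 2,
      ((x i : M2 F)) a b = ((x k : M2 F)) a b := by
    rintro i k rfl a b; rfl
  have hut : ∀ r : Fin n, ((x (σ r) : M2 F)) 1 0 = 0 := fun r => ut_mem (x (σ r)).2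
  obtain ⟨p10, p00, p11, p01⟩ := prod_entries (fun r => (x (σ r) : M2 F)) hut
  have e00 : (∏ r : Fin n, ((x (σ r) : M2 F)) 0 0) = 0 :=
    Finset.prod_eq_zero (Finset.mem_univ (σ.symm j))
      (x00_zero (by rw [Equiv.apply_symm_apply]; exact hj) (x (σ (σ.symm j))).2)
  have e11' : (∏ r : Fin n, ((x (σ r) : M2 F)) 1 1) = 0 :=
    Finset.prod_eq_zero (Finset.mem_univ (σ.symm j))
      (x11_zero (by rw [Equiv.apply_symm_apply]; exact hj) (x (σ (σ.symm j))).2)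
  set p : Fin n := σ.symm j with hp
  set w : Fin n → F := fun r => if (r:ℕ) < (p:ℕ) then ((x (σ r) : M2 F)) 0 0
    else if r = p then ((x (σ r) : M2 F)) 0 1 else ((x (σ r) : M2 F)) 1 1 with hw
  have hodd : pOdd (fun r => (x (σ r) : M2 F)) = ∏ r, w r := by
    rw [pOdd]
    rw [Finset.sum_eq_single p]
    · rw [← prod_trichotomy w p]
      congr 1
      · congr 1
        · apply Finset.prod_congr rfl
          intro r hr
          simp only [Finset.mem_filter] at hr
          simp only [hw]
          rw [if_pos hr.2]
        · simp [hw]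
      · apply Finset.prod_congr rfl
        intro r hr
        simp only [Finset.mem_filter] at hr
        simp only [hw]
        have h1 : ¬ ((r:ℕ) < (p:ℕ)) := by omega
        have h2 : r ≠ p := Fin.ne_of_val_ne (by omega)
        rw [if_neg h1, if_neg h2]
    · intro q _ hq
      have hqf : γ (σ q) = false := by
        apply ho
        intro h
        exact hq (by rw [hp, ← h, Equiv.symm_apply_apply])
      rw [x01_zero hqf (x (σ q)).2]
      ring
    · intro h; exact absurd (Finset.mem_univ p) h
  have hreindex : (∏ r, w r) = ∏ i : Fin n, (if i = j then (x i : M2 F) 0 1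
      else if (if i = j then true else decide ((σ.symm i : ℕ) < (σ.symm j : ℕ)))
        then (x i : M2 F) 0 0 else (x i : M2 F) 1 1) := by
    rw [← Equiv.prod_comp σ.symm w]
    apply Finset.prod_congr rfl
    intro i _
    simp only [hw]
    by_cases hij : i = j
    · subst hij
      rw [if_neg (by rw [hp]; exact lt_irrefl _), if_pos (by rw [hp]), if_pos rfl]
      exact hxc (Equiv.apply_symm_apply σ i) 0 1
    · rw [if_neg hij]
      by_cases hlt : (σ.symm i : ℕ) < (σ.symm j : ℕ)
      · rw [if_pos (by rw [hp]; exact hlt), if_pos (by simp [hij, hlt])]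
        exact hxc (Equiv.apply_symm_apply σ i) 0 0
      · have hne : σ.symm i ≠ p := by
          rw [hp]; exact fun h => hij (σ.symm.injective h)
        rw [if_neg (by rw [hp]; exact hlt), if_neg hne, if_neg (by simp [hij, hlt])]
        exact hxc (Equiv.apply_symm_apply σ i) 1 1
  ext a b
  fin_cases a <;> fin_cases b <;>
    simp only [Pmap, Gmap, Fin.zero_eta, Fin.mk_one, Fin.isValue, Matrix.smul_apply,
      e12_app, smul_eq_mul]
  · rw [p00, e00]; norm_num
  · rw [p01, hodd, hreindex]; norm_num
  · rw [p10]; norm_num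
  · rw [p11, e11']; norm_num

lemma finrank_one_case (j : Fin n) (hj : γ j = true) (ho : ∀ i, i ≠ j → γ i = false) :
    Module.finrank F ↥(Vspan F (F1set F) γ) = 2 ^ (n - 1) := by
  classical
  have hGP : ∀ v : {v : Fin n → Bool // v j = true}, ∃ σ : Equiv.Perm (Fin n),
      Pmap F γ σ = Gmap F γ j v := by
    intro v
    set key : Fin n → ℕ := fun i => if i = j then 1 else if v.1 i then 0 else 2 with hkey
    refine ⟨Tuple.sort key, ?_⟩
    have mono := Tuple.monotone_sort key
    rw [Pmap_eq_Gmap γ j hj ho]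
    apply congrArg
    apply Subtype.ext
    funext i
    by_cases hij : i = j
    · subst hij; simp [v.2]
    · simp only [if_neg hij]
      set σ := Tuple.sort key with hσ
      rcases Bool.dichotomy (v.1 i) with hv | hv
      · rw [hv]
        simp only [decide_eq_false_iff_not]
        intro hlt
        have h1 : σ.symm i ≤ σ.symm j := le_of_lt (Fin.lt_def.mpr hlt)
        have h2 := mono h1
        simp only [Function.comp_apply, Equiv.apply_symm_apply, hkey] at h2
        simp only [if_neg hij, hv, if_pos rfl] at h2
        norm_num at h2
      · rw [hv]
        simp only [decide_eq_true_eq]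
        by_contra hle
        have h1 : σ.symm j ≤ σ.symm i := Fin.le_def.mpr (by omega)
        have h2 := mono h1
        simp only [Function.comp_apply, Equiv.apply_symm_apply, hkey] at h2
        simp only [if_neg hij, hv, if_pos rfl] at h2
        norm_num at h2
  have hrange : Set.range (Pmap F γ) = Set.range (Gmap F γ j) := by
    ext f
    constructor
    · rintro ⟨σ, rfl⟩
      exact ⟨_, (Pmap_eq_Gmap γ j hj ho σ).symm⟩
    · rintro ⟨v, rfl⟩
      obtain ⟨σ, hσ⟩ := hGP v
      exact ⟨σ, hσ⟩
  have hli : LinearIndependent F (Gmap F γ j) := by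
    rw [Fintype.linearIndependent_iff]
    intro c hc w
    set Xw : ∀ i : Fin n, ↥(utComp F (γ i)) := fun i =>
      if h : i = j then ⟨e12 F, by rw [h, hj]; exact e12_mem⟩
      else ⟨if w.1 i then e11 F else e22 F, by
        rw [ho i h]
        by_cases hwi : w.1 i = true
        · rw [if_pos hwi]; exact e11_mem
        · rw [if_neg hwi]; exact e22_mem⟩
      with hXw
    have heval : ∀ v, Gmap F γ j v Xw = (if v = w then (1:F) else 0) • e12 F := by
      intro v
      simp only [Gmap]
      congr 1
      by_cases hvw : v = w
      · subst hvw
        rw [if_pos rfl]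
        apply Finset.prod_eq_one
        intro i _
        by_cases hij : i = j
        · subst hij
          simp [hXw]
        · rcases Bool.dichotomy (v.1 i) with hv | hv <;> simp [hXw, hij, hv]
      · rw [if_neg hvw]
        have hex : ∃ i, v.1 i ≠ w.1 i := by
          by_contra h
          push_neg at h
          exact hvw (Subtype.ext (funext h))
        obtain ⟨i, hi⟩ := hex
        have hij : i ≠ j := by
          intro h; rw [h, v.2, w.2] at hi; exact hi rfl
        apply Finset.prod_eq_zero (Finset.mem_univ i)
        rcases Bool.dichotomy (v.1 i) with hv | hv <;>
          rcases Bool.dichotomy (w.1 i) with hw | hw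
        · exact absurd (hv.trans hw.symm) hi
        · simp [hXw, hij, hv, hw]
        · simp [hXw, hij, hv, hw]
        · exact absurd (hv.trans hw.symm) hi
    have hXeval := congrFun hc Xw
    simp only [Finset.sum_apply, Pi.smul_apply, Pi.zero_apply, heval, smul_smul]
      at hXeval
    rw [← Finset.sum_smul] at hXeval
    have hsum : (∑ v, c v * if v = w then (1:F) else 0) = c w := by
      rw [Finset.sum_congr rfl (fun v _ => by rw [mul_ite, mul_one, mul_zero])]
      rw [Finset.sum_ite_eq' Finset.univ w c]
      simp
    rw [hsum] at hXeval
    have hne : e12 F ≠ 0 := by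
      intro h
      have := congrFun (congrFun h 0) 1
      simp at this
    rcases smul_eq_zero.1 hXeval with h | h
    · exact h
    · exact absurd h hne
  rw [Vspan_eq, hrange, finrank_span_eq_card hli]
  have E : {v : Fin n → Bool // v j = true} ≃ ({i : Fin n // i ≠ j} → Bool) :=
    { toFun := fun v i => v.1 i.1
      invFun := fun u => ⟨fun i => if h : i = j then true else u ⟨i, h⟩, by simp⟩
      left_inv := by
        intro v
        apply Subtype.ext
        funext i
        by_cases h : i = j
        · subst h; simp [v.2]
        · simp [h]
      right_inv := by
        intro u
        funext i
        simp [i.2] }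
  rw [Fintype.card_congr E, Fintype.card_fun]
  have hcard : Fintype.card {i : Fin n // i ≠ j} = n - 1 := by
    have h := Fintype.card_subtype_compl (fun i : Fin n => i = j)
    rw [Fintype.card_subtype_eq, Fintype.card_fin] at h
    exact h
  rw [hcard, Fintype.card_bool]

end Cases
end S14

theorem stmt14 (F : Type*) [Field F] [CharZero F] (n : ℕ) (hn : 1 ≤ n) :
    (∑ γ : Fin n → Bool, Module.finrank F ↥(Vspan F (F1set F) γ))
      = n * 2 ^ (n - 1) + 1 := by
  classical
  have key : ∀ γ : Fin n → Bool, Module.finrank F ↥(Vspan F (F1set F) γ)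
      = (if ∃ j : Fin n, γ = fun i => decide (i = j) then 2 ^ (n-1) else 0)
        + (if γ = fun _ => false then 1 else 0) := by
    intro γ
    by_cases h1 : ∃ j : Fin n, γ = fun i => decide (i = j)
    · obtain ⟨j, rfl⟩ := h1
      rw [if_pos ⟨j, rfl⟩, if_neg, add_zero]
      · exact S14.finrank_one_case _ j (by simp) (fun i hi => by simp [hi])
      · intro h
        have := congrFun h j
        simp at this
    · by_cases h2 : γ = fun _ => false
      · rw [if_neg h1, if_pos h2, zero_add]
        exact S14.finrank_zero_case γ hn (fun i => congrFun h2 i)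
      · rw [if_neg h1, if_neg h2, add_zero]
        have hx : ∃ i, γ i = true := by
          by_contra h
          push_neg at h
          exact h2 (funext fun i => Bool.eq_false_iff.mpr (h i))
        obtain ⟨j, hj⟩ := hx
        have hy : ∃ i, i ≠ j ∧ γ i = true := by
          by_contra h
          push_neg at h
          apply h1
          refine ⟨j, funext fun i => ?_⟩
          by_cases hij : i = j
          · subst hij; simp [hj]
          · rw [decide_eq_false hij]
            exact Bool.eq_false_iff.mpr (h i hij)
        obtain ⟨i2, hne2, h2t⟩ := hy
        exact S14.finrank_two_case γ i2 j hne2 h2t hj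
  rw [Finset.sum_congr rfl (fun γ _ => key γ), Finset.sum_add_distrib]
  have hinj : Function.Injective (fun j : Fin n => fun i : Fin n => decide (i = j)) := by
    intro a b hab
    have := congrFun hab a
    simp at this
    exact this
  have hA : (∑ γ : Fin n → Bool,
      if ∃ j : Fin n, γ = fun i => decide (i = j) then 2 ^ (n-1) else 0)
      = n * 2 ^ (n-1) := by
    have himg : Finset.filter
        (fun γ : Fin n → Bool => ∃ j : Fin n, γ = fun i => decide (i = j)) Finset.univ
        = Finset.image (fun j : Fin n => fun i : Fin n => decide (i = j)) Finset.univ := by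
      ext γ
      simp [eq_comm]
    rw [← Finset.sum_filter, himg, Finset.sum_const,
      Finset.card_image_of_injective _ hinj, Finset.card_univ, Fintype.card_fin,
      smul_eq_mul]
  have hB : (∑ γ : Fin n → Bool, if γ = fun _ => false then 1 else 0) = 1 := by
    rw [Finset.sum_ite_eq' Finset.univ (fun _ => false) (fun _ => 1)]
    simp
  rw [hA, hB]
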